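/- Let H ≥ 1, L ≥ 1, and let σ_1,…,σ_L and τ_1,…,τ_L be permutations of {0,…,H−1}, with associated expanded codewords c_σ(l,j,k) = T_{σ_l}(j,k) and c_τ(l,j,k) = T_{τ_l}(j,k). Then there exists an involutive row-preserving permutation Π of the position set {1,…,L}×{0,…,H−1}×{0,…,H−1} such that c_σ ∘ Π = c_τ, c_τ ∘ Π = c_σ, and for every received word R one has d_H(R ∘ Π, c_τ) = d_H(R, c_σ) and d_H(R ∘ Π, c_σ) = d_H(R, c_τ). -/

import Mathlib

/-- The permutation code matrix of a permutation `σ` of `{0,…,H−1}`: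
entry `(j,k)` is `true` iff `σ k = j`. -/
def pcm {H : ℕ} (σ : Equiv.Perm (Fin H)) (j k : Fin H) : Bool :=
  decide (σ k = j)

/-- The expanded codeword associated with a sequence `σ_1, …, σ_L` of
permutations of `{0,…,H−1}`: position `(l, j, k)` carries entry `(j,k)` of the
permutation code matrix of `σ_l`. -/
def expandedCodeword {H L : ℕ} (σ : Fin L → Equiv.Perm (Fin H)) :
    Fin L × Fin H × Fin H → Bool :=
  fun p => pcm (σ p.1) p.2.1 p.2.2

lemma hamming_comp_perm {α : Type*} [Fintype α] (f g : α → Bool) (e : Equiv.Perm α) :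
    hammingDist (f ∘ e) (g ∘ e) = hammingDist f g := by
  simp only [hammingDist]
  apply Finset.card_bij (fun a _ => e a)
  · intro a ha
    simp only [Finset.mem_filter, Finset.mem_univ, true_and] at *
    exact ha
  · intro a _ b _ h
    exact e.injective h
  · intro b hb
    refine ⟨e.symm b, ?_, by simp⟩
    simp only [Finset.mem_filter, Finset.mem_univ, true_and, Function.comp_apply,
      Equiv.apply_symm_apply] at *
    exact hb

theorem stmt_1 (H L : ℕ) (hH : 1 ≤ H) (hL : 1 ≤ L)
    (σ τ : Fin L → Equiv.Perm (Fin H)) :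
    ∃ Φ : Equiv.Perm (Fin L × Fin H × Fin H),
      (∃ π : Fin L → Fin H → Equiv.Perm (Fin H),
        ∀ p : Fin L × Fin H × Fin H, Φ p = (p.1, p.2.1, π p.1 p.2.1 p.2.2)) ∧
      Function.Involutive Φ ∧
      (expandedCodeword σ ∘ Φ = expandedCodeword τ) ∧
      (expandedCodeword τ ∘ Φ = expandedCodeword σ) ∧
      (∀ R : Fin L × Fin H × Fin H → Bool,
        hammingDist (R ∘ Φ) (expandedCodeword τ) = hammingDist R (expandedCodeword σ) ∧
        hammingDist (R ∘ Φ) (expandedCodeword σ) = hammingDist R (expandedCodeword τ)) := by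
  set π : Fin L → Fin H → Equiv.Perm (Fin H) :=
    fun l j => Equiv.swap ((σ l)⁻¹ j) ((τ l)⁻¹ j) with hπ
  have hinv : Function.Involutive
      (fun p : Fin L × Fin H × Fin H => (p.1, p.2.1, π p.1 p.2.1 p.2.2)) := by
    intro p
    simp [hπ, Equiv.swap_apply_self]
  set Φ : Equiv.Perm (Fin L × Fin H × Fin H) := hinv.toPerm _ with hΦ
  have hΦapp : ∀ p : Fin L × Fin H × Fin H, Φ p = (p.1, p.2.1, π p.1 p.2.1 p.2.2) :=
    fun p => rfl
  have key : ∀ (l : Fin L) (j k : Fin H),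
      pcm (σ l) j (π l j k) = pcm (τ l) j k := by
    intro l j k
    simp only [pcm, hπ]
    rcases eq_or_ne k ((τ l)⁻¹ j) with h | h
    · subst h
      simp [Equiv.swap_apply_right, Equiv.Perm.inv_def]
    · rcases eq_or_ne k ((σ l)⁻¹ j) with h2 | h2
      · subst h2
        rw [Equiv.swap_apply_left]
        have ha : ¬ σ l ((τ l)⁻¹ j) = j := by
          intro hc
          apply h
          apply_fun (σ l)⁻¹ at hc
          simp only [Equiv.Perm.inv_def, Equiv.symm_apply_apply] at hc
          exact hc.symm
        have hb : ¬ τ l ((σ l)⁻¹ j) = j := by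
          intro hc
          apply h
          apply_fun (τ l)⁻¹ at hc
          simpa using hc
        simp only [Equiv.Perm.inv_def] at ha hb
        simp [ha, hb]
      · rw [Equiv.swap_apply_of_ne_of_ne h2 h]
        have h4 : ¬ σ l k = j := by
          intro hc; apply h2; apply_fun (σ l)⁻¹ at hc; simpa using hc
        have h5 : ¬ τ l k = j := by
          intro hc; apply h; apply_fun (τ l)⁻¹ at hc; simpa using hc
        simp [h4, h5]
  have hστ : expandedCodeword σ ∘ Φ = expandedCodeword τ := by
    funext p
    exact key p.1 p.2.1 p.2.2
  have hτσ : expandedCodeword τ ∘ Φ = expandedCodeword σ := by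
    funext p
    have h := congrFun hστ (Φ p)
    simp only [Function.comp_apply] at h ⊢
    rw [show Φ (Φ p) = p from hinv p] at h
    exact h.symm
  refine ⟨Φ, ⟨π, hΦapp⟩, hinv, hστ, hτσ, fun R => ⟨?_, ?_⟩⟩
  · calc hammingDist (R ∘ Φ) (expandedCodeword τ)
        = hammingDist (R ∘ Φ) (expandedCodeword σ ∘ Φ) := by rw [hστ]
      _ = hammingDist R (expandedCodeword σ) := hamming_comp_perm _ _ _
  · calc hammingDist (R ∘ Φ) (expandedCodeword σ)
        = hammingDist (R ∘ Φ) (expandedCodeword τ ∘ Φ) := by rw [hτσ]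
      _ = hammingDist R (expandedCodeword τ) := hamming_comp_perm _ _ _
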